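/- Multi-layer strong duality: for x ∈ X, choosing π_i* ∈ ∂f_i(f_{i+1:k}(x)) for i = k, k−1, …, 1 (where f_{i+1:k}(x) = f_{i+1}∘⋯∘f_k(x) and f_{k+1:k}(x) = x) yields L(π*_{1:k}; x) = f₁∘⋯∘f_k(x) + u(x). -/
import Mathlib


open Finset

/-- The partial composition of the layer functions: `compF k d f x j` is
`f_{k-j+1} ∘ ⋯ ∘ f_k (x)` (1-based paper indexing); at `j = k` it is the full
composition `f₁ ∘ ⋯ ∘ f_k (x)`. -/
noncomputable def compF (k : ℕ) (d : ℕ → ℕ)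
    (f : ∀ i, (Fin (d (i + 1)) → ℝ) → (Fin (d i) → ℝ))
    (x : Fin (d k) → ℝ) : ∀ j : ℕ, Fin (d (k - j)) → ℝ
  | 0 => x
  | (j + 1) =>
    if h : j + 1 ≤ k then
      f (k - (j + 1)) (fun b => compF k d f x j (Fin.cast (congrArg d (by omega)) b))
    else fun _ => 0

/-- `compAt k d f x i` is the inner composition `f_{i+1:k}(x)` viewed as a vector
indexed by `Fin (d (i+1))` (0-indexed layers; `compAt k d f x k = x` vacuously). -/
noncomputable def compAt (k : ℕ) (d : ℕ → ℕ)
    (f : ∀ i, (Fin (d (i + 1)) → ℝ) → (Fin (d i) → ℝ))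
    (x : Fin (d k) → ℝ) (i : ℕ) : Fin (d (i + 1)) → ℝ :=
  fun b =>
    if h : i + 1 ≤ k then
      compF k d f x (k - (i + 1)) (Fin.cast (congrArg d (by omega)) b)
    else 0

/-- The nested Lagrangian `L_i`: `L_{k+1} = x`,
`L_i(π_{i:k}, x) = π_i L_{i+1}(π_{i+1:k}, x) − f_i*(π_i)`. -/
noncomputable def nestedL (k : ℕ) (d : ℕ → ℕ)
    (π : ∀ i, Matrix (Fin (d i)) (Fin (d (i + 1))) ℝ)
    (fstar : ∀ i, Matrix (Fin (d i)) (Fin (d (i + 1))) ℝ → Fin (d i) → ℝ)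
    (x : Fin (d k) → ℝ) : ∀ j : ℕ, Fin (d (k - j)) → ℝ
  | 0 => x
  | (j + 1) =>
    if h : j + 1 ≤ k then
      fun a =>
        (∑ b : Fin (d (k - j)),
          π (k - (j + 1)) a (Fin.cast (congrArg d (by omega)) b) *
            nestedL k d π fstar x j b)
        - fstar (k - (j + 1)) (π (k - (j + 1))) a
    else fun _ => 0

/-- Multi-layer strong duality: choosing `π_i* ∈ ∂f_i(f_{i+1:k}(x))` for each layer
(encoded through the Fenchel–Young equalities at the composition points) yields
`L(π*_{1:k}; x) = f₁∘⋯∘f_k(x) + u(x)`. -/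
theorem stmt_12 (k : ℕ) (d : ℕ → ℕ) (hd0 : d 0 = 1)
    (f : ∀ i, (Fin (d (i + 1)) → ℝ) → (Fin (d i) → ℝ))
    (u : (Fin (d k) → ℝ) → ℝ)
    (fstar : ∀ i, Matrix (Fin (d i)) (Fin (d (i + 1))) ℝ → Fin (d i) → ℝ)
    (x : Fin (d k) → ℝ)
    (π : ∀ i, Matrix (Fin (d i)) (Fin (d (i + 1))) ℝ)
    -- π_i* ∈ ∂f_i(f_{i+1:k}(x)), componentwise
    (hsub : ∀ i, i < k → ∀ a (y' : Fin (d (i + 1)) → ℝ),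
      f i y' a ≥ f i (compAt k d f x i) a +
        ∑ b, π i a b * (y' b - compAt k d f x i b))
    -- Fenchel–Young equality at the composition points (a consequence of the choice)
    (hFY : ∀ i, i < k → ∀ a,
      fstar i (π i) a =
        (∑ b, π i a b * compAt k d f x i b) - f i (compAt k d f x i) a) :
    ∀ a, nestedL k d π fstar x k a + u x = compF k d f x k a + u x := by
  have compF_congr : ∀ {j1 j2 : ℕ} (h : j1 = j2) (b : Fin (d (k - j1))),
      compF k d f x j1 b = compF k d f x j2 (Fin.cast (by rw [h]) b) := by
    intro j1 j2 h b; subst h; rfl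
  have key : ∀ j, j ≤ k → ∀ a, nestedL k d π fstar x j a = compF k d f x j a := by
    intro j
    induction j with
    | zero => intro _ a; rfl
    | succ j ih =>
      intro hj a
      have hjk : j ≤ k := by omega
      have hik : k - (j + 1) < k := by omega
      have hi1 : k - (j + 1) + 1 = k - j := by omega
      rw [nestedL, compF, dif_pos hj, dif_pos hj]
      rw [hFY _ hik a]
      have hcompAt : ∀ b : Fin (d (k - (j + 1) + 1)),
          compAt k d f x (k - (j + 1)) b
            = compF k d f x j (Fin.cast (congrArg d (by omega)) b) := by
        intro b
        rw [compAt, dif_pos (by omega : k - (j + 1) + 1 ≤ k)]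
        rw [compF_congr (show k - (k - (j + 1) + 1) = j by omega)]
        rfl
      have hsum : (∑ b : Fin (d (k - j)),
            π (k - (j + 1)) a (Fin.cast (congrArg d (by omega)) b) *
              nestedL k d π fstar x j b)
          = ∑ b, π (k - (j + 1)) a b * compAt k d f x (k - (j + 1)) b := by
        refine (Fintype.sum_equiv (finCongr (congrArg d hi1)) _ _ ?_).symm
        intro b
        rw [ih hjk, hcompAt]
        rfl
      rw [hsum]
      ring_nf
      congr 1
      funext b
      rw [hcompAt]
  intro a
  rw [key k le_rfl a]
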